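/- Let G be a group, let u = Σ_{g∈G} α_g g be an element of the integral group ring ℤG, let p be a prime, and let q = q'·m be a positive integer where m is the p-part of q and q' is not divisible by p. Let s ∈ G, let 𝒦 = { (g₁,…,g_q) ∈ G^q : g₁⋯g_q ∼ s }, let π be the cyclic-shift permutation of 𝒦, and for a positive divisor t of q let 𝒦*_t denote the union of the ⟨π⟩-orbits on 𝒦 of length exactly t. Then ν_s(u^q) ≡ Σ_{t | q'} Σ_{(g₁,…,g_q) ∈ 𝒦*_t} Π_{j=1}^{q'} α_{g_j} (mod p), where the outer sum runs over the positive divisors t of q'. -/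

import Mathlib

open scoped Classical
open Finset Function

/-- The partial augmentation `ν_y(u)` of `u ∈ ℤG` at `y ∈ G`: the sum of the
coefficients of `u` over the conjugacy class of `y`. -/
noncomputable def pAug {G : Type*} [Group G] (y : G) (u : MonoidAlgebra ℤ G) : ℤ :=
  ∑ g ∈ (Finsupp.support u.coeff).filter (fun g => IsConj y g), u.coeff g

/-- The cyclic shift `π` sending `(g₁, g₂, …, g_q)` to `(g₂, …, g_q, g₁)`. -/
def cShift {G : Type*} (q : ℕ) (g : Fin q → G) : Fin q → G :=
  g ∘ finRotate q

section Aux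

set_option linter.unusedSectionVars false

variable {G : Type*} [Group G] {n : ℕ}

open Fin.NatCast

lemma cShift_iter_apply (k : ℕ) (g : Fin (n+1) → G) (j : Fin (n+1)) :
    ((cShift (n+1))^[k] g) j = g (j + (k : Fin (n+1))) := by
  induction k generalizing j with
  | zero => simp
  | succ k ih =>
    rw [Function.iterate_succ_apply']
    show ((cShift (n+1))^[k] g) (finRotate (n+1) j) = _
    rw [ih, finRotate_succ_apply]
    push_cast
    rw [add_assoc, add_comm (1 : Fin (n+1)) _]

lemma cShift_iter_self (g : Fin (n+1) → G) : ((cShift (n+1))^[n+1] g) = g := by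
  funext j
  rw [cShift_iter_apply]
  simp

lemma cShift_iter_id : ((cShift (n+1) : (Fin (n+1) → G) → _))^[n+1] = id := by
  funext g; exact cShift_iter_self g

lemma coords_of_periodic {t : ℕ} (g : Fin (n+1) → G)
    (hper : (cShift (n+1))^[t] g = g) :
    ∀ (k r : ℕ) (h : r + t*k < n+1), g ⟨r + t*k, h⟩ = g ⟨r, by omega⟩ := by
  intro k
  induction k with
  | zero =>
    intro r h
    simp
  | succ k ih =>
    intro r h
    have harith : r + t*(k+1) = (r + t*k) + t := by ring
    have ht : t < n + 1 := by omega
    have h2 : r + t*k < n+1 := by omega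
    have hx : (⟨r + t*(k+1), h⟩ : Fin (n+1)) = (⟨r + t*k, h2⟩ : Fin (n+1)) + (t : Fin (n+1)) := by
      rw [Fin.add_def]
      refine Fin.ext ?_
      simp only [Fin.val_natCast]
      rw [Nat.mod_eq_of_lt ht, Nat.mod_eq_of_lt (by omega)]
      omega
    rw [hx]
    have := congrFun hper (⟨r + t*k, h2⟩ : Fin (n+1))
    rw [cShift_iter_apply] at this
    rw [this]
    exact ih r h2

lemma prod_block {M : Type*} [CommMonoid M] {t d N : ℕ} (g : Fin (n+1) → G)
    (hper : (cShift (n+1))^[t] g = g) (f : G → M)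
    (hN : N = t * d) (hNq : N ≤ n+1) (htq : t ≤ n+1) :
    ∏ j : Fin N, f (g (Fin.castLE hNq j)) =
      (∏ j : Fin t, f (g (Fin.castLE htq j))) ^ d := by
  set e : Fin d × Fin t ≃ Fin N := finProdFinEquiv.trans (finCongr (by rw [hN, mul_comm])) with he
  rw [← Equiv.prod_comp e (fun j => f (g (Fin.castLE hNq j)))]
  rw [Fintype.prod_prod_type]
  have hbound : ∀ (i : Fin d) (j : Fin t), (j : ℕ) + t * (i : ℕ) < n + 1 := by
    intro i j
    have h0 : t * ((i : ℕ) + 1) = t * (i : ℕ) + t := Nat.mul_succ t i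
    have h2 : t * ((i : ℕ) + 1) ≤ t * d := Nat.mul_le_mul_left t i.isLt
    have := j.isLt
    omega
  have key : ∀ (i : Fin d) (j : Fin t),
      f (g (Fin.castLE hNq (e (i, j)))) = f (g (Fin.castLE htq j)) := by
    intro i j
    have hval : (Fin.castLE hNq (e (i, j))) =
        (⟨(j : ℕ) + t * (i : ℕ), hbound i j⟩ : Fin (n+1)) := by
      refine Fin.ext ?_
      simp [he]
    rw [hval, coords_of_periodic g hper i j]
    congr 1
  simp_rw [key]
  rw [Finset.prod_const]
  simp

lemma ofFn_cShift (g : Fin (n+1) → G) :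
    List.ofFn (cShift (n+1) g) = (List.ofFn (fun i : Fin n => g i.succ)).concat (g 0) := by
  rw [List.ofFn_succ']
  congr 1
  · have hfun : (fun i : Fin n => cShift (n+1) g i.castSucc) = fun i => g i.succ := by
      funext i
      show g (finRotate (n+1) _) = _
      rw [finRotate_succ_apply, Fin.coeSucc_eq_succ]
    rw [hfun]
  · show g (finRotate (n+1) (Fin.last n)) = g 0
    rw [finRotate_last]

lemma isConj_prod_cShift (g : Fin (n+1) → G) (s : G) :
    IsConj (List.ofFn (cShift (n+1) g)).prod s ↔ IsConj (List.ofFn g).prod s := by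
  have h1 : (List.ofFn (cShift (n+1) g)).prod =
      (List.ofFn (fun i : Fin n => g i.succ)).prod * g 0 := by
    rw [ofFn_cShift, List.prod_concat]
  have h2 : (List.ofFn g).prod = g 0 * (List.ofFn (fun i : Fin n => g i.succ)).prod := by
    rw [List.ofFn_succ]; simp
  have hc : IsConj (List.ofFn (cShift (n+1) g)).prod (List.ofFn g).prod := by
    rw [h1, h2]
    exact isConj_iff.2 ⟨g 0, by group⟩
  exact ⟨fun h => hc.symm.trans h, fun h => hc.trans h⟩

lemma prod_comp_cShift {M : Type*} [CommMonoid M] (q : ℕ) (g : Fin q → G) (f : G → M) :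
    ∏ j : Fin q, f (cShift q g j) = ∏ j : Fin q, f (g j) :=
  Equiv.prod_comp (finRotate q) (fun j => f (g j))

lemma cShift_mem_piFinset {s : Finset G} (q : ℕ) (g : Fin q → G)
    (h : g ∈ Fintype.piFinset (fun _ : Fin q => s)) :
    cShift q g ∈ Fintype.piFinset (fun _ : Fin q => s) := by
  rw [Fintype.mem_piFinset] at h ⊢
  intro a
  exact h _

lemma pow_apply_eq_sum_tuples (u : MonoidAlgebra ℤ G) :
    ∀ (N : ℕ) (x : G), (u ^ N).coeff x =
      ∑ g ∈ Fintype.piFinset (fun _ : Fin N => u.coeff.support),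
        if (List.ofFn g).prod = x then ∏ j, u.coeff (g j) else 0 := by
  intro N
  induction N with
  | zero =>
    intro x
    rw [pow_zero]
    rw [show (1 : MonoidAlgebra ℤ G).coeff x = (Finsupp.single (1 : G) (1 : ℤ)) x from rfl,
      Finsupp.single_apply]
    rw [Finset.sum_eq_single (fun _ : Fin 0 => (1 : G))]
    · simp
    · intro b _ hb
      exact absurd (funext fun j => absurd j.isLt (by omega)) hb
    · intro h
      exact absurd (Fintype.mem_piFinset.2 fun a => absurd a.isLt (by omega)) h
  | succ N ih =>
    intro x
    rw [pow_succ']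
    rw [MonoidAlgebra.coeff_mul_apply_left]
    rw [Finsupp.sum]
    have step1 : ∀ a ∈ u.coeff.support, u.coeff a * (u ^ N).coeff (a⁻¹ * x) =
        ∑ h ∈ Fintype.piFinset (fun _ : Fin N => u.coeff.support),
          if a * (List.ofFn h).prod = x then u.coeff a * ∏ j, u.coeff (h j) else 0 := by
      intro a _
      rw [ih, Finset.mul_sum]
      refine Finset.sum_congr rfl fun h _ => ?_
      rw [mul_ite, mul_zero]
      congr 1
      simp [eq_inv_mul_iff_mul_eq]
    rw [Finset.sum_congr rfl step1]
    rw [← Finset.sum_product']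
    refine Finset.sum_nbij' (fun p => Fin.cons p.1 p.2) (fun g => (g 0, Fin.tail g))
      ?_ ?_ ?_ ?_ ?_
    · rintro ⟨a, h⟩ hp
      rw [Finset.mem_product] at hp
      rw [Fintype.mem_piFinset]
      intro j
      induction j using Fin.cases with
      | zero => simpa using hp.1
      | succ i => simpa using Fintype.mem_piFinset.1 hp.2 i
    · intro g hg
      rw [Fintype.mem_piFinset] at hg
      rw [Finset.mem_product]
      exact ⟨hg 0, Fintype.mem_piFinset.2 fun i => hg i.succ⟩
    · rintro ⟨a, h⟩ _
      simp [Fin.tail_cons]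
    · intro g _
      exact Fin.cons_self_tail g
    · rintro ⟨a, h⟩ _
      have hofn : (List.ofFn (Fin.cons a h : Fin (N+1) → G)).prod = a * (List.ofFn h).prod := by
        rw [List.ofFn_succ]
        simp
      have hprod : (∏ j, u.coeff ((Fin.cons a h : Fin (N+1) → G) j)) = u.coeff a * ∏ j, u.coeff (h j) := by
        rw [Fin.prod_univ_succ]
        simp
      rw [hofn, hprod]

lemma pAug_pow_eq_sum_tuples (u : MonoidAlgebra ℤ G) (q : ℕ) (s : G) :
    pAug s (u ^ q) =
      ∑ g ∈ Fintype.piFinset (fun _ : Fin q => u.coeff.support),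
        if IsConj (List.ofFn g).prod s then ∏ j, u.coeff (g j) else 0 := by
  set S := Fintype.piFinset (fun _ : Fin q => u.coeff.support) with hS
  set T := (S.image fun g => (List.ofFn g).prod) ∪ (u ^ q).coeff.support with hT
  have h1 : pAug s (u ^ q) = ∑ x ∈ (u ^ q).coeff.support, if IsConj s x then (u ^ q).coeff x else 0 := by
    rw [pAug, Finset.sum_filter]
  have h2 : ∑ x ∈ (u ^ q).coeff.support, (if IsConj s x then (u ^ q).coeff x else 0)
      = ∑ x ∈ T, if IsConj s x then (u ^ q).coeff x else 0 := by
    refine Finset.sum_subset (Finset.subset_union_right) fun x _ hx => ?_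
    rw [Finsupp.notMem_support_iff.1 hx]
    simp
  have h3 : ∀ x ∈ T, (if IsConj s x then (u ^ q).coeff x else 0) =
      ∑ g ∈ S, if (List.ofFn g).prod = x ∧ IsConj s x then ∏ j, u.coeff (g j) else 0 := by
    intro x _
    split_ifs with hc
    · rw [pow_apply_eq_sum_tuples]
      refine Finset.sum_congr rfl fun g _ => ?_
      simp only [hc, and_true]
    · symm
      refine Finset.sum_eq_zero fun g _ => ?_
      simp only [hc, and_false, if_false]
  rw [h1, h2, Finset.sum_congr rfl h3, Finset.sum_comm]
  refine Finset.sum_congr rfl fun g hg => ?_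
  have hmem : (List.ofFn g).prod ∈ T := by
    rw [hT]
    exact Finset.mem_union_left _ (Finset.mem_image_of_mem _ hg)
  have : ∀ x ∈ T, (if (List.ofFn g).prod = x ∧ IsConj s x then ∏ j, u.coeff (g j) else 0)
      = if x = (List.ofFn g).prod then (if IsConj s x then ∏ j, u.coeff (g j) else 0) else 0 := by
    intro x _
    split_ifs with h h1 h2 <;> tauto
  rw [Finset.sum_congr rfl this, Finset.sum_ite_eq' T ((List.ofFn g).prod)
    (fun x => if IsConj s x then ∏ j, u.coeff (g j) else 0), if_pos hmem]
  by_cases hc : IsConj s (List.ofFn g).prod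
  · rw [if_pos hc, if_pos (isConj_comm.1 hc)]
  · rw [if_neg hc, if_neg (fun h => hc (isConj_comm.1 h))]

/-- The orbit setoid of the cyclic shift. -/
def shiftSetoid (n : ℕ) (G : Type*) [Group G] : Setoid (Fin (n+1) → G) where
  r g h := ∃ k, (cShift (n+1))^[k] g = h
  iseqv := by
    constructor
    · exact fun g => ⟨0, rfl⟩
    · rintro g h ⟨k, rfl⟩
      refine ⟨(n+1)*k - k, ?_⟩
      rw [← Function.iterate_add_apply]
      have hk : (n+1)*k - k + k = (n+1)*k := by
        have : (n+1)*k = n*k + k := by ring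
        omega
      rw [hk, Function.iterate_mul, cShift_iter_id, Function.iterate_id, id_eq]
    · rintro g h i ⟨k, rfl⟩ ⟨l, rfl⟩
      exact ⟨l + k, Function.iterate_add_apply _ l k g⟩

lemma mem_periodicPts_cShift (g : Fin (n+1) → G) : g ∈ periodicPts (cShift (n+1)) :=
  mk_mem_periodicPts (Nat.succ_pos n) (cShift_iter_self g)

lemma sum_filter_minper_eq_zero {p : ℕ} [Fact p.Prime] (u : MonoidAlgebra ℤ G) (s : G)
    {t : ℕ} (hpt : p ∣ t) :
    ∑ g ∈ (Fintype.piFinset fun _ : Fin (n+1) => u.coeff.support).filter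
        (fun g => minimalPeriod (cShift (n+1)) g = t),
      (if IsConj (List.ofFn g).prod s then ∏ j, ((u.coeff (g j) : ZMod p)) else 0) = 0 := by
  set σ : (Fin (n+1) → G) → (Fin (n+1) → G) := cShift (n+1) with hσ
  set F : (Fin (n+1) → G) → ZMod p :=
    fun g => if IsConj (List.ofFn g).prod s then ∏ j, ((u.coeff (g j) : ZMod p)) else 0 with hF
  have hFinv : ∀ g, F (σ g) = F g := by
    intro g
    show (if IsConj (List.ofFn (cShift (n+1) g)).prod s then
        ∏ j, ((u.coeff ((cShift (n+1) g) j) : ZMod p)) else 0) = F g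
    rw [prod_comp_cShift (n+1) g (fun x => ((u.coeff x : ZMod p)))]
    exact if_congr (isConj_prod_cShift g s) rfl rfl
  have hFiter : ∀ (k : ℕ) g, F (σ^[k] g) = F g := by
    intro k
    induction k with
    | zero => intro g; rfl
    | succ k ih =>
      intro g
      rw [Function.iterate_succ_apply, ih, hFinv]
  apply Finset.sum_cancels_of_partition_cancels (shiftSetoid n G)
  intro x hx
  rw [Finset.mem_filter] at hx
  obtain ⟨hxS, hmin⟩ := hx
  have hper : σ^[t] x = x := by
    rw [← hmin]; exact isPeriodicPt_minimalPeriod σ x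
  have ht0 : 0 < t := by
    rw [← hmin]
    exact minimalPeriod_pos_of_mem_periodicPts (mem_periodicPts_cShift x)
  have hiter_mem : ∀ k : ℕ, σ^[k] x ∈ Fintype.piFinset fun _ : Fin (n+1) => u.coeff.support := by
    intro k
    induction k with
    | zero => exact hxS
    | succ k ih => rw [Function.iterate_succ_apply']; exact cShift_mem_piFinset _ _ ih
  have hclass : ((Fintype.piFinset fun _ : Fin (n+1) => u.coeff.support).filter
        (fun g => minimalPeriod (cShift (n+1)) g = t)).filter
        (fun a => (shiftSetoid n G).r a x)
      = (Finset.range t).image (fun k => σ^[k] x) := by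
    ext a
    simp only [Finset.mem_filter, Finset.mem_image, Finset.mem_range]
    constructor
    · rintro ⟨⟨haS, hamin⟩, k, hk⟩
      refine ⟨((n+1)*k - k) % t, Nat.mod_lt _ ht0, ?_⟩
      have ha : σ^[(n+1)*k - k] x = a := by
        rw [← hk, ← Function.iterate_add_apply]
        have hkk : (n+1)*k - k + k = (n+1)*k := by
          have : (n+1)*k = n*k + k := by ring
          omega
        rw [hkk, Function.iterate_mul, cShift_iter_id, Function.iterate_id, id_eq]
      rw [Function.IsPeriodicPt.iterate_mod_apply hper, ha]
    · rintro ⟨k, hk, rfl⟩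
      refine ⟨⟨hiter_mem k, ?_⟩, ⟨t - k, ?_⟩⟩
      · rw [minimalPeriod_apply_iterate (mem_periodicPts_cShift x) k, hmin]
      · rw [← Function.iterate_add_apply]
        have : t - k + k = t := by omega
        rw [this]
        exact hper
  rw [hclass]
  rw [Finset.sum_image ?hinj]
  case hinj =>
    intro a ha b hb hab
    refine Function.iterate_injOn_Iio_minimalPeriod ?_ ?_ hab
    · rw [hmin]; exact Finset.mem_range.1 ha
    · rw [hmin]; exact Finset.mem_range.1 hb
  have : ∀ k ∈ Finset.range t, F (σ^[k] x) = F x := fun k _ => hFiter k x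
  rw [Finset.sum_congr rfl this, Finset.sum_const, Finset.card_range]
  rw [nsmul_eq_mul]
  rw [(CharP.cast_eq_zero_iff (ZMod p) p t).2 hpt, zero_mul]

end Aux

theorem nu_pow_q_congr_sum_orbits {G : Type*} [Group G] (u : MonoidAlgebra ℤ G)
    (p q q' m : ℕ) (hp : p.Prime) (hq : 0 < q) (hqm : q = q' * m)
    (hm : ∃ i : ℕ, m = p ^ i) (hq'p : ¬ p ∣ q') (s : G) :
    pAug s (u ^ q) ≡
      (∑ t ∈ q'.divisors,
        ∑ᶠ g : Fin q → G,
          if IsConj (List.ofFn g).prod s ∧ Function.minimalPeriod (cShift q) g = t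
          then ∏ j : Fin q', u.coeff (g (Fin.castLE (Nat.le_of_dvd hq ⟨m, hqm⟩) j)) else 0)
      [ZMOD (p : ℤ)] := by
  haveI := Fact.mk hp
  obtain ⟨i, rfl⟩ := hm
  have hq'0 : 0 < q' := by
    rcases Nat.eq_zero_or_pos q' with h | h
    · subst h; simp at hqm; omega
    · exact h
  rw [← ZMod.intCast_eq_intCast_iff]
  obtain ⟨n, rfl⟩ : ∃ n, q = n + 1 := ⟨q - 1, by omega⟩
  have hq'le : q' ≤ n + 1 := Nat.le_of_dvd hq ⟨p ^ i, hqm⟩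
  have hq'dvd : q' ∣ n + 1 := ⟨p ^ i, hqm⟩
  -- the common middle expression
  have key : ((pAug s (u ^ (n+1)) : ℤ) : ZMod p) =
      ∑ t ∈ q'.divisors,
        ∑ g ∈ (Fintype.piFinset fun _ : Fin (n+1) => u.coeff.support).filter
            (fun g => minimalPeriod (cShift (n+1)) g = t),
          (if IsConj (List.ofFn g).prod s then
            ∏ j : Fin q', ((u.coeff (g (Fin.castLE hq'le j)) : ZMod p)) else 0) := by
    have hA : ((pAug s (u ^ (n+1)) : ℤ) : ZMod p) =
        ∑ g ∈ (Fintype.piFinset fun _ : Fin (n+1) => u.coeff.support),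
          (if IsConj (List.ofFn g).prod s then
            ∏ j : Fin (n+1), ((u.coeff (g j) : ZMod p)) else 0) := by
      rw [pAug_pow_eq_sum_tuples, Int.cast_sum]
      refine Finset.sum_congr rfl fun g _ => ?_
      rw [apply_ite (fun z : ℤ => (z : ZMod p)), Int.cast_prod, Int.cast_zero]
    have hB : ∑ g ∈ (Fintype.piFinset fun _ : Fin (n+1) => u.coeff.support),
          (if IsConj (List.ofFn g).prod s then
            ∏ j : Fin (n+1), ((u.coeff (g j) : ZMod p)) else 0)
        = ∑ t ∈ (n+1).divisors,
            ∑ g ∈ (Fintype.piFinset fun _ : Fin (n+1) => u.coeff.support).filter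
              (fun g => minimalPeriod (cShift (n+1)) g = t),
            (if IsConj (List.ofFn g).prod s then
              ∏ j : Fin (n+1), ((u.coeff (g j) : ZMod p)) else 0) :=
      (Finset.sum_fiberwise_of_maps_to (fun g _ => Nat.mem_divisors.2
        ⟨Function.IsPeriodicPt.minimalPeriod_dvd (cShift_iter_self g), Nat.succ_ne_zero n⟩) _).symm
    have hC : ∑ t ∈ ((n+1).divisors.filter (fun t => ¬ t ∣ q')),
          ∑ g ∈ (Fintype.piFinset fun _ : Fin (n+1) => u.coeff.support).filter
            (fun g => minimalPeriod (cShift (n+1)) g = t),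
          (if IsConj (List.ofFn g).prod s then
            ∏ j : Fin (n+1), ((u.coeff (g j) : ZMod p)) else 0) = 0 := by
      refine Finset.sum_eq_zero fun t ht => ?_
      rw [Finset.mem_filter, Nat.mem_divisors] at ht
      obtain ⟨⟨htdvd, -⟩, htq'⟩ := ht
      have hpt : p ∣ t := by
        by_contra hnp
        have hco : Nat.Coprime t (p ^ i) :=
          Nat.Coprime.pow_right i (((hp.coprime_iff_not_dvd).2 hnp).symm)
        exact htq' (hco.dvd_of_dvd_mul_right (hqm ▸ htdvd))
      exact sum_filter_minper_eq_zero u s hpt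
    have hD : ((n+1).divisors.filter (fun t => t ∣ q')) = q'.divisors := by
      ext a
      simp only [Finset.mem_filter, Nat.mem_divisors]
      constructor
      · rintro ⟨⟨-, -⟩, h⟩
        exact ⟨h, hq'0.ne'⟩
      · rintro ⟨h, -⟩
        exact ⟨⟨h.trans hq'dvd, Nat.succ_ne_zero n⟩, h⟩
    rw [hA, hB, ← Finset.sum_filter_add_sum_filter_not ((n+1).divisors) (fun t => t ∣ q'), hC,
      add_zero, hD]
    refine Finset.sum_congr rfl fun t ht => Finset.sum_congr rfl fun g hg => ?_
    -- termwise rewrite of the full product into the truncated one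
    rw [Finset.mem_filter] at hg
    rw [Nat.mem_divisors] at ht
    obtain ⟨hgS, hgmin⟩ := hg
    obtain ⟨htq', -⟩ := ht
    have ht0 : 0 < t := Nat.pos_of_dvd_of_pos htq' hq'0
    have htn : t ≤ n + 1 := le_trans (Nat.le_of_dvd hq'0 htq') hq'le
    have hper : (cShift (n+1))^[t] g = g := by
      rw [← hgmin]; exact isPeriodicPt_minimalPeriod _ g
    have htq : t ∣ n + 1 := htq'.trans hq'dvd
    have h1 : (∏ j : Fin (n+1), ((u.coeff (g j) : ZMod p)))
        = (∏ j : Fin t, ((u.coeff (g (Fin.castLE htn j)) : ZMod p))) ^ ((n+1)/t) :=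
      prod_block g hper (fun x => ((u.coeff x : ZMod p))) (Nat.mul_div_cancel' htq).symm le_rfl htn
    have h2 : (∏ j : Fin q', ((u.coeff (g (Fin.castLE hq'le j)) : ZMod p)))
        = (∏ j : Fin t, ((u.coeff (g (Fin.castLE htn j)) : ZMod p))) ^ (q'/t) :=
      prod_block g hper (fun x => ((u.coeff x : ZMod p))) (Nat.mul_div_cancel' htq').symm hq'le htn
    have h3 : (n+1)/t = p^i * (q'/t) := by
      rw [hqm, mul_comm q' (p^i), Nat.mul_div_assoc _ htq']
    rw [h1, h2, h3, pow_mul, ZMod.pow_card_pow]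
  rw [key, Int.cast_sum]
  refine Finset.sum_congr rfl fun t ht => ?_
  rw [Nat.mem_divisors] at ht
  have ht0 : 0 < t := Nat.pos_of_dvd_of_pos ht.1 hq'0
  have htq'le : t ≤ q' := Nat.le_of_dvd hq'0 ht.1
  have hsub : Function.support (fun g : Fin (n+1) → G =>
      if IsConj (List.ofFn g).prod s ∧ Function.minimalPeriod (cShift (n+1)) g = t
      then ∏ j : Fin q', u.coeff (g (Fin.castLE (Nat.le_of_dvd hq ⟨p ^ i, hqm⟩) j)) else 0)
      ⊆ ↑(Fintype.piFinset fun _ : Fin (n+1) => u.coeff.support) := by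
    intro g hg
    rw [Function.mem_support] at hg
    split_ifs at hg with hcond
    · obtain ⟨hconj, hmin⟩ := hcond
      have hper : (cShift (n+1))^[t] g = g := by
        rw [← hmin]; exact isPeriodicPt_minimalPeriod _ g
      have hcoord : ∀ j : Fin q', u.coeff (g (Fin.castLE (Nat.le_of_dvd hq ⟨p ^ i, hqm⟩) j)) ≠ 0 :=
        fun j => Finset.prod_ne_zero_iff.1 hg j (Finset.mem_univ j)
      simp only [Finset.coe_sort_coe, Finset.mem_coe, Fintype.mem_piFinset]
      intro a
      rw [Finsupp.mem_support_iff]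
      have hrlt : (a : ℕ) % t < q' := lt_of_lt_of_le (Nat.mod_lt _ ht0) htq'le
      have ha : (⟨(a : ℕ) % t + t * ((a : ℕ) / t), by
          rw [Nat.mod_add_div]; exact a.isLt⟩ : Fin (n+1)) = a :=
        Fin.ext (Nat.mod_add_div _ _)
      have h5 := coords_of_periodic g hper ((a : ℕ) / t) ((a : ℕ) % t)
        (by rw [Nat.mod_add_div]; exact a.isLt)
      rw [ha] at h5
      rw [h5]
      exact hcoord ⟨(a : ℕ) % t, hrlt⟩
    · exact absurd rfl hg
  rw [finsum_eq_finset_sum_of_support_subset _ hsub, Int.cast_sum, Finset.sum_filter]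
  refine Finset.sum_congr rfl fun g _ => ?_
  rw [apply_ite (fun z : ℤ => (z : ZMod p)), Int.cast_prod, Int.cast_zero]
  by_cases hmin : minimalPeriod (cShift (n+1)) g = t
  · rw [if_pos hmin]
    by_cases hconj : IsConj (List.ofFn g).prod s
    · rw [if_pos hconj, if_pos ⟨hconj, hmin⟩]
    · rw [if_neg hconj, if_neg (fun h => hconj h.1)]
  · rw [if_neg hmin, if_neg (fun h => hmin h.2)]
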